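/- Let m ≥ 3 and let G be a doubly transitive subgroup of Perm(Fin m). Then the 𝔽₃-algebra of all 2^{m−1}·G-equivariant 𝔽₃-linear endomorphisms of the permutation module 𝔽₃^X (X = Fin m × Bool) has dimension exactly 3 over 𝔽₃. -/

import Mathlib

open Equiv Finset

namespace SignedPerm

variable {m : ℕ}

/-- The sign-flip involution ν on `Fin m × Bool`. -/
def nu (m : ℕ) : Equiv.Perm (Fin m × Bool) where
  toFun p := (p.1, !p.2)
  invFun p := (p.1, !p.2)
  left_inv p := by simp
  right_inv p := by simp

/-- The signed permutation `(i,b) ↦ (s i, εᵢ · b)`, where `ε i = true` means sign flip. -/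
def signedOf (s : Equiv.Perm (Fin m)) (ε : Fin m → Bool) : Equiv.Perm (Fin m × Bool) where
  toFun p := (s p.1, xor (ε p.1) p.2)
  invFun p := (s.symm p.1, xor (ε (s.symm p.1)) p.2)
  left_inv p := by simp [← Bool.xor_assoc]
  right_inv p := by simp [← Bool.xor_assoc]

/-- The sign product `∏ᵢ εᵢ` of a system of signs (`true` = `-1`). -/
def signProd (ε : Fin m → Bool) : ℤˣ := ∏ i, if ε i then -1 else 1

lemma signedOf_one : signedOf (1 : Equiv.Perm (Fin m)) (fun _ => false) = 1 :=
  Equiv.ext fun p => by simp [signedOf]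

lemma signedOf_mul (s t : Equiv.Perm (Fin m)) (ε η : Fin m → Bool) :
    signedOf s ε * signedOf t η = signedOf (s * t) (fun i => xor (ε (t i)) (η i)) :=
  Equiv.ext fun p => by simp [signedOf, Equiv.Perm.mul_apply, Bool.xor_assoc]

lemma signedOf_inv (s : Equiv.Perm (Fin m)) (ε : Fin m → Bool) :
    (signedOf s ε)⁻¹ = signedOf s⁻¹ (fun i => ε (s⁻¹ i)) :=
  inv_eq_of_mul_eq_one_right <| by
    rw [signedOf_mul]
    simp [signedOf_one]

lemma signProd_const_false : signProd (fun _ : Fin m => false) = 1 := by simp [signProd]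

lemma signProd_comp (t : Equiv.Perm (Fin m)) (ε : Fin m → Bool) :
    signProd (fun i => ε (t i)) = signProd ε := by
  simpa [signProd] using Equiv.prod_comp t (fun i => if ε i then (-1 : ℤˣ) else 1)

lemma signProd_xor (ε η : Fin m → Bool) :
    signProd (fun i => xor (ε i) (η i)) = signProd ε * signProd η := by
  rw [signProd, signProd, signProd, ← Finset.prod_mul_distrib]
  refine Finset.prod_congr rfl fun i _ => ?_
  cases ε i <;> cases η i <;> simp

/-- The group `2^m · G` of all signed permutations with underlying permutation in `G`. -/
def bigSigned (G : Subgroup (Equiv.Perm (Fin m))) : Subgroup (Equiv.Perm (Fin m × Bool)) where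
  carrier := {σ | ∃ s ∈ G, ∃ ε : Fin m → Bool, σ = signedOf s ε}
  one_mem' := ⟨1, G.one_mem, fun _ => false, signedOf_one.symm⟩
  mul_mem' := by
    rintro σ τ ⟨s, hs, ε, rfl⟩ ⟨t, ht, η, rfl⟩
    exact ⟨s * t, G.mul_mem hs ht, _, (signedOf_mul s t ε η)⟩
  inv_mem' := by
    rintro σ ⟨s, hs, ε, rfl⟩
    exact ⟨s⁻¹, G.inv_mem hs, _, signedOf_inv s ε⟩

/-- The group `2^{m-1} · G` of signed permutations with underlying permutation in `G`
and sign product `1`. -/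
def evenSigned (G : Subgroup (Equiv.Perm (Fin m))) : Subgroup (Equiv.Perm (Fin m × Bool)) where
  carrier := {σ | ∃ s ∈ G, ∃ ε : Fin m → Bool, σ = signedOf s ε ∧ signProd ε = 1}
  one_mem' := ⟨1, G.one_mem, fun _ => false, signedOf_one.symm, signProd_const_false⟩
  mul_mem' := by
    rintro σ τ ⟨s, hs, ε, rfl, hε⟩ ⟨t, ht, η, rfl, hη⟩
    refine ⟨s * t, G.mul_mem hs ht, _, signedOf_mul s t ε η, ?_⟩
    rw [signProd_xor (fun i => ε (t i)) η, signProd_comp t ε, hε, hη, one_mul]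
  inv_mem' := by
    rintro σ ⟨s, hs, ε, rfl, hε⟩
    exact ⟨s⁻¹, G.inv_mem hs, _, signedOf_inv s ε, by rw [signProd_comp s⁻¹ ε, hε]⟩

end SignedPerm

namespace SignedPerm

/-- The 𝔽₃-subalgebra (here: submodule) of `H`-equivariant 𝔽₃-linear endomorphisms of the
permutation module `𝔽₃^X`, for `H = 2^{m-1}·G`. -/
def equivEnd {m : ℕ} (G : Subgroup (Equiv.Perm (Fin m))) :
    Submodule (ZMod 3) (Module.End (ZMod 3) ((Fin m × Bool) → ZMod 3)) where
  carrier := {T | ∀ σ ∈ evenSigned G, ∀ φ : (Fin m × Bool) → ZMod 3, ∀ x,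
      T (fun y => φ (σ⁻¹ y)) x = T φ (σ⁻¹ x)}
  add_mem' := by
    intro a b ha hb σ hσ φ x
    simp only [LinearMap.add_apply, Pi.add_apply, ha σ hσ φ x, hb σ hσ φ x]
  zero_mem' := by intro σ hσ φ x; simp
  smul_mem' := by
    intro c a ha σ hσ φ x
    simp only [LinearMap.smul_apply, Pi.smul_apply, ha σ hσ φ x]

end SignedPerm


namespace SignedPermAux

open SignedPerm

variable {m : ℕ}

lemma nu_ne (x : Fin m × Bool) : nu m x ≠ x := by
  simp [nu, Prod.ext_iff]

lemma mem_comm_nu {G : Subgroup (Equiv.Perm (Fin m))} {σ : Equiv.Perm (Fin m × Bool)}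
    (hσ : σ ∈ evenSigned G) (x : Fin m × Bool) : σ (nu m x) = nu m (σ x) := by
  obtain ⟨s, hs, ε, rfl, -⟩ := hσ
  simp [signedOf, nu, Bool.xor_not]

lemma exists_third (hm : 3 ≤ m) (i j : Fin m) : ∃ k : Fin m, k ≠ i ∧ k ≠ j := by
  by_contra h
  push_neg at h
  have hsub : (Finset.univ : Finset (Fin m)) ⊆ {i, j} := by
    intro k _
    rcases eq_or_ne k i with hk | hk
    · simp [hk]
    · simp [h k hk]
  have := Finset.card_le_card hsub
  have h2 : ({i, j} : Finset (Fin m)).card ≤ 2 :=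
    le_trans (Finset.card_insert_le _ _) (by simp)
  simp [Finset.card_univ] at this
  omega

lemma exists_g (hm : 3 ≤ m) {G : Subgroup (Equiv.Perm (Fin m))}
    (hG : ∀ a b c d : Fin m, a ≠ b → c ≠ d → ∃ g ∈ G, g a = c ∧ g b = d)
    (i j : Fin m) : ∃ g ∈ G, g i = j := by
  obtain ⟨a, hai, -⟩ := exists_third hm i i
  obtain ⟨c, hcj, -⟩ := exists_third hm j j
  obtain ⟨g, hg, h1, -⟩ := hG i a j c (Ne.symm hai) (Ne.symm hcj)
  exact ⟨g, hg, h1⟩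

lemma signProd_cases3 (ε : Fin m → Bool) (i j k : Fin m) (hij : i ≠ j) (hik : i ≠ k)
    (hjk : j ≠ k) (h : ∀ l, l ≠ i → l ≠ j → l ≠ k → ε l = false)
    (hk : ε k = xor (ε i) (ε j)) : signProd ε = 1 := by
  unfold signProd
  rw [← Finset.prod_subset (Finset.subset_univ ({i, j, k} : Finset (Fin m)))
    (fun l _ hl => by
      simp only [Finset.mem_insert, Finset.mem_singleton, not_or] at hl
      simp [h l hl.1 hl.2.1 hl.2.2])]
  rw [Finset.prod_insert (by simp [hij, hik]), Finset.prod_insert (by simp [hjk]),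
    Finset.prod_singleton, hk]
  cases ε i <;> cases ε j <;> simp

lemma signProd_cases2 (ε : Fin m → Bool) (i k : Fin m) (hik : i ≠ k)
    (h : ∀ l, l ≠ i → l ≠ k → ε l = false) (hk : ε k = ε i) : signProd ε = 1 := by
  unfold signProd
  rw [← Finset.prod_subset (Finset.subset_univ ({i, k} : Finset (Fin m)))
    (fun l _ hl => by
      simp only [Finset.mem_insert, Finset.mem_singleton, not_or] at hl
      simp [h l hl.1 hl.2])]
  rw [Finset.prod_insert (by simp [hik]), Finset.prod_singleton, hk]
  cases ε i <;> simp

/-- Transitivity of `evenSigned G` on points of `Fin m × Bool`. -/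
lemma exists_sigma_pt (hm : 3 ≤ m) {G : Subgroup (Equiv.Perm (Fin m))}
    (hG : ∀ a b c d : Fin m, a ≠ b → c ≠ d → ∃ g ∈ G, g a = c ∧ g b = d)
    (x x' : Fin m × Bool) : ∃ σ ∈ evenSigned G, σ x = x' := by
  obtain ⟨g, hg, hgx⟩ := exists_g hm hG x.1 x'.1
  obtain ⟨k, hk, -⟩ := exists_third hm x.1 x.1
  set e : Bool := xor x.2 x'.2 with he
  set ε : Fin m → Bool := fun l => if l = x.1 then e else if l = k then e else false with hε
  have hsign : signProd ε = 1 := by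
    refine signProd_cases2 ε x.1 k (Ne.symm hk) (fun l h1 h2 => by simp [hε, h1, h2]) ?_
    simp [hε, hk]
  refine ⟨signedOf g ε, ⟨g, hg, ε, rfl, hsign⟩, ?_⟩
  have : signedOf g ε x = (g x.1, xor (ε x.1) x.2) := rfl
  rw [this, hgx]
  have hεx : ε x.1 = e := by simp [hε]
  rw [hεx, he]
  exact Prod.ext rfl (by cases x.2 <;> cases x'.2 <;> rfl)

/-- Double transitivity of `evenSigned G` on pairs with distinct indices. -/
lemma exists_sigma_pair (hm : 3 ≤ m) {G : Subgroup (Equiv.Perm (Fin m))}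
    (hG : ∀ a b c d : Fin m, a ≠ b → c ≠ d → ∃ g ∈ G, g a = c ∧ g b = d)
    (x y x' y' : Fin m × Bool) (hxy : x.1 ≠ y.1) (hxy' : x'.1 ≠ y'.1) :
    ∃ σ ∈ evenSigned G, σ x = x' ∧ σ y = y' := by
  obtain ⟨g, hg, hgx, hgy⟩ := hG x.1 y.1 x'.1 y'.1 hxy hxy'
  obtain ⟨k, hk1, hk2⟩ := exists_third hm x.1 y.1
  set e1 : Bool := xor x.2 x'.2 with he1
  set e2 : Bool := xor y.2 y'.2 with he2
  set ε : Fin m → Bool := fun l =>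
    if l = x.1 then e1 else if l = y.1 then e2 else if l = k then xor e1 e2 else false with hε
  have hεx : ε x.1 = e1 := by simp [hε]
  have hεy : ε y.1 = e2 := by simp [hε, Ne.symm hxy]
  have hsign : signProd ε = 1 := by
    refine signProd_cases3 ε x.1 y.1 k hxy (Ne.symm hk1) (Ne.symm hk2)
      (fun l h1 h2 h3 => by simp [hε, h1, h2, h3]) ?_
    rw [hεx, hεy]
    simp [hε, hk1, hk2]
  refine ⟨signedOf g ε, ⟨g, hg, ε, rfl, hsign⟩, ?_, ?_⟩
  · have : signedOf g ε x = (g x.1, xor (ε x.1) x.2) := rfl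
    rw [this, hgx, hεx, he1]
    exact Prod.ext rfl (by cases x.2 <;> cases x'.2 <;> rfl)
  · have : signedOf g ε y = (g y.1, xor (ε y.1) y.2) := rfl
    rw [this, hgy, hεy, he2]
    exact Prod.ext rfl (by cases y.2 <;> cases y'.2 <;> rfl)

/-- The operator `φ ↦ φ ∘ ν`. -/
def Nend (m : ℕ) : Module.End (ZMod 3) ((Fin m × Bool) → ZMod 3) :=
  LinearMap.funLeft (ZMod 3) (ZMod 3) (nu m)

/-- The "all-ones" operator `φ ↦ (const) ∑ φ`. -/
def Jend (m : ℕ) : Module.End (ZMod 3) ((Fin m × Bool) → ZMod 3) where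
  toFun φ := fun _ => ∑ y, φ y
  map_add' φ ψ := by funext x; simp [Finset.sum_add_distrib]
  map_smul' c φ := by funext x; simp [Finset.mul_sum]

@[simp] lemma Nend_apply (φ : (Fin m × Bool) → ZMod 3) (x : Fin m × Bool) :
    Nend m φ x = φ (nu m x) := rfl

@[simp] lemma Jend_apply (φ : (Fin m × Bool) → ZMod 3) (x : Fin m × Bool) :
    Jend m φ x = ∑ y, φ y := rfl


/-- Delta function at a point. -/
def dlt (m : ℕ) (y : Fin m × Bool) : (Fin m × Bool) → ZMod 3 := Pi.single y 1

lemma dlt_apply (y z : Fin m × Bool) : dlt m y z = if z = y then 1 else 0 :=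
  Pi.single_apply _ _ _

lemma dlt_self (y : Fin m × Bool) : dlt m y y = 1 := by
  rw [dlt_apply, if_pos rfl]

end SignedPermAux

open SignedPermAux

open SignedPerm in
/-- if `m ≥ 3` and `G` is doubly transitive on `Fin m`, then the 𝔽₃-algebra of
`2^{m-1}·G`-equivariant 𝔽₃-linear endomorphisms of `𝔽₃^X` has dimension exactly 3 over `𝔽₃`. -/
theorem statement6 (m : ℕ) (hm : 3 ≤ m) (G : Subgroup (Equiv.Perm (Fin m)))
    (hG : ∀ a b c d : Fin m, a ≠ b → c ≠ d → ∃ g ∈ G, g a = c ∧ g b = d) :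
    Module.finrank (ZMod 3) (equivEnd G) = 3 := by
  classical
  have h01 : (⟨0, by omega⟩ : Fin m) ≠ ⟨1, by omega⟩ := by simp [Fin.ext_iff]
  set x0 : Fin m × Bool := (⟨0, by omega⟩, false) with hx0
  set x1 : Fin m × Bool := (⟨1, by omega⟩, false) with hx1
  have hx01 : x0.1 ≠ x1.1 := h01
  have hli : LinearIndependent (ZMod 3)
      ![(LinearMap.id : Module.End (ZMod 3) ((Fin m × Bool) → ZMod 3)), Nend m, Jend m] := by
    rw [Fintype.linearIndependent_iff]
    intro g hg
    rw [Fin.sum_univ_three] at hg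
    have hsum : (∑ y, dlt m x0 y) = 1 := by
      simp [dlt_apply]
    have key : ∀ z, g 0 * dlt m x0 z + g 1 * dlt m x0 (nu m z) + g 2 = 0 := by
      intro z
      have h := congrFun (LinearMap.congr_fun hg (dlt m x0)) z
      simpa [Matrix.cons_val_zero, Matrix.cons_val_one, Nend_apply, Jend_apply, hsum]
        using h
    have e1 := key x0
    have e2 := key (nu m x0)
    have e3 := key x1
    have hnu1 : dlt m x0 (nu m x0) = 0 := by
      rw [dlt_apply, if_neg (nu_ne x0)]
    have hnunu : nu m (nu m x0) = x0 := by simp [nu]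
    have h10 : dlt m x0 x1 = 0 := by
      rw [dlt_apply, if_neg (by simp [hx0, hx1, Prod.ext_iff, Fin.ext_iff])]
    have h1nu : dlt m x0 (nu m x1) = 0 := by
      rw [dlt_apply, if_neg (by simp [hx0, hx1, nu, Prod.ext_iff, Fin.ext_iff])]
    rw [hnu1, hnunu, dlt_self, mul_zero, mul_one, zero_add] at e2
    rw [dlt_self, hnu1, mul_one, mul_zero, add_zero] at e1
    rw [h10, h1nu, mul_zero, mul_zero, zero_add, zero_add] at e3
    intro i
    fin_cases i
    · rw [e3, add_zero] at e1; exact e1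
    · rw [e3, add_zero] at e2; exact e2
    · exact e3
  have hImem : (LinearMap.id : Module.End (ZMod 3) ((Fin m × Bool) → ZMod 3))
      ∈ equivEnd G := by
    intro σ hσ φ x
    rfl
  have hNmem : Nend m ∈ equivEnd G := by
    intro σ hσ φ x
    show φ (σ⁻¹ (nu m x)) = φ (nu m (σ⁻¹ x))
    rw [mem_comm_nu ((evenSigned G).inv_mem hσ) x]
  have hJmem : Jend m ∈ equivEnd G := by
    intro σ hσ φ x
    show (∑ y, φ (σ⁻¹ y)) = ∑ y, φ y
    exact Equiv.sum_comp σ⁻¹ φ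
  have hspan : equivEnd G = Submodule.span (ZMod 3)
      (Set.range ![(LinearMap.id : Module.End (ZMod 3) ((Fin m × Bool) → ZMod 3)),
        Nend m, Jend m]) := by
    apply le_antisymm
    · intro T hT
      have hT' : ∀ σ ∈ evenSigned G, ∀ φ : (Fin m × Bool) → ZMod 3, ∀ x,
          T (fun y => φ (σ⁻¹ y)) x = T φ (σ⁻¹ x) := hT
      have hKinv : ∀ σ ∈ evenSigned G, ∀ x y,
          T (dlt m (σ y)) (σ x) = T (dlt m y) x := by
        intro σ hσ x y
        have h1 : (fun z => dlt m y (σ⁻¹ z)) = dlt m (σ y) := by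
          funext z
          simp [dlt_apply, Equiv.Perm.inv_eq_iff_eq, Equiv.symm_apply_eq]
        have h2 := hT' σ hσ (dlt m y) (σ x)
        rw [h1, Equiv.Perm.inv_def, Equiv.symm_apply_apply] at h2
        exact h2
      set a : ZMod 3 := T (dlt m x0) x0 with ha
      set b : ZMod 3 := T (dlt m (nu m x0)) x0 with hb
      set c : ZMod 3 := T (dlt m x1) x0 with hc
      have hdiag : ∀ x, T (dlt m x) x = a := by
        intro x
        obtain ⟨σ, hσ, hx⟩ := exists_sigma_pt hm hG x0 x
        rw [← hx, hKinv σ hσ, ha]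
      have hanti : ∀ x, T (dlt m (nu m x)) x = b := by
        intro x
        obtain ⟨σ, hσ, hx⟩ := exists_sigma_pt hm hG x0 x
        rw [← hx, ← mem_comm_nu hσ, hKinv σ hσ, hb]
      have hoff : ∀ x y, x.1 ≠ y.1 → T (dlt m y) x = c := by
        intro x y h
        obtain ⟨σ, hσ, hx, hy⟩ := exists_sigma_pair hm hG x0 x1 x y hx01 h
        rw [← hx, ← hy, hKinv σ hσ, hc]
      have hKform : ∀ x y, T (dlt m y) x
          = c + (if y = x then a - c else 0) + (if y = nu m x then b - c else 0) := by
        intro x y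
        by_cases h1 : y = x
        · subst h1
          rw [if_pos rfl, if_neg (fun h => nu_ne y h.symm), hdiag]
          ring
        · by_cases h2 : y = nu m x
          · subst h2
            rw [if_neg h1, if_pos rfl, hanti]
            ring
          · rw [if_neg h1, if_neg h2, hoff]
            · ring
            · intro hxy
              rcases Bool.eq_or_eq_not y.2 x.2 with h | h
              · exact h1 (Prod.ext hxy.symm h)
              · exact h2 (Prod.ext hxy.symm (by simp [nu, h]))
      have hTform : ∀ φ : (Fin m × Bool) → ZMod 3, ∀ x, T φ x
          = (a - c) * φ x + (b - c) * φ (nu m x) + c * ∑ y, φ y := by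
        intro φ x
        have hrepr : φ = ∑ y, φ y • dlt m y := by
          funext z
          rw [Finset.sum_apply]
          simp [dlt_apply]
        conv_lhs => rw [hrepr]
        rw [map_sum, Finset.sum_apply]
        simp only [map_smul, LinearMap.smul_apply, Pi.smul_apply, smul_eq_mul]
        have step : ∀ y, φ y * T (dlt m y) x
            = φ y * c + (if y = x then φ y * (a - c) else 0)
              + (if y = nu m x then φ y * (b - c) else 0) := by
          intro y
          rw [hKform x y, mul_add, mul_add]
          simp only [mul_ite, mul_zero]
        rw [Finset.sum_congr rfl (fun y _ => step y), Finset.sum_add_distrib,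
          Finset.sum_add_distrib,
          Finset.sum_ite_eq' Finset.univ x (fun y => φ y * (a - c)),
          Finset.sum_ite_eq' Finset.univ (nu m x) (fun y => φ y * (b - c)),
          ← Finset.sum_mul]
        simp only [Finset.mem_univ, if_true]
        ring
      have hTdecomp : T = (a - c) • (LinearMap.id : Module.End (ZMod 3)
          ((Fin m × Bool) → ZMod 3)) + (b - c) • Nend m + c • Jend m := by
        apply LinearMap.ext
        intro φ
        funext x
        simp only [LinearMap.add_apply, LinearMap.smul_apply, Pi.add_apply, Pi.smul_apply,
          LinearMap.id_coe, id_eq, Nend_apply, Jend_apply, smul_eq_mul]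
        rw [hTform φ x]
      rw [hTdecomp]
      refine Submodule.add_mem _ (Submodule.add_mem _ ?_ ?_) ?_
      · exact Submodule.smul_mem _ _ (Submodule.subset_span ⟨0, rfl⟩)
      · exact Submodule.smul_mem _ _ (Submodule.subset_span ⟨1, rfl⟩)
      · exact Submodule.smul_mem _ _ (Submodule.subset_span ⟨2, rfl⟩)
    · rw [Submodule.span_le]
      rintro _ ⟨i, rfl⟩
      fin_cases i
      · exact hImem
      · exact hNmem
      · exact hJmem
  rw [hspan, finrank_span_eq_card hli, Fintype.card_fin]
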